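/- arXiv:2411.09910 — 4 statements merged into one kernel-verified Lean document; each statement's English description precedes it below -/
import Mathlib

section
/- For all integers k ≥ 1 and positive integers n, n · Σ_{d ∣ n} σ_{−1}(n/d) · J_k(d) = σ_{k+1}(n), where σ_s(m) = Σ_{e ∣ m} e^s and J_k(d) = d^k ∏_{p ∣ d} (1 − p^{−k}) is Jacobi's totient function. -/
open Finset ArithmeticFunction
open scoped ArithmeticFunction.Moebius ArithmeticFunction.sigma ArithmeticFunction.zeta

/-- The arithmetic function `n ↦ (n : ℚ)⁻¹ ^ k`. -/
noncomputable def invPowQ (k : ℕ) : ArithmeticFunction ℚ :=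
  ⟨fun n => if n = 0 then 0 else ((n : ℚ)⁻¹) ^ k, by simp⟩

lemma invPowQ_apply (k n : ℕ) (hn : n ≠ 0) : invPowQ k n = ((n : ℚ)⁻¹) ^ k := by
  simp [invPowQ, hn]

lemma isMultiplicative_invPowQ (k : ℕ) : (invPowQ k).IsMultiplicative := by
  refine ⟨by simp [invPowQ], fun {m n} _ => ?_⟩
  rcases eq_or_ne m 0 with rfl | hm
  · simp [invPowQ]
  rcases eq_or_ne n 0 with rfl | hn
  · simp [invPowQ]
  simp only [invPowQ, ArithmeticFunction.coe_mk, mul_eq_zero, hm, hn, or_self, if_false,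
    Nat.cast_mul, mul_inv, mul_pow]

lemma squarefree_prod_primes {s : Finset ℕ} (hs : ∀ p ∈ s, p.Prime) :
    Squarefree (∏ p ∈ s, p) := by
  classical
  induction s using Finset.induction with
  | empty => simpa using squarefree_one
  | @insert p s hps ih =>
    rw [Finset.prod_insert hps]
    have hp : p.Prime := hs p (Finset.mem_insert_self _ _)
    have hs' : ∀ q ∈ s, q.Prime := fun q hq => hs q (Finset.mem_insert_of_mem hq)
    have hcop : Nat.Coprime p (∏ q ∈ s, q) := by
      apply Nat.Coprime.prod_right
      intro q hq
      exact (Nat.coprime_primes hp (hs' q hq)).mpr (by rintro rfl; exact hps hq)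
    rw [Nat.squarefree_mul hcop]
    exact ⟨hp.squarefree, ih hs'⟩

/-- Expansion of the Jacobi-type product as a Möbius sum over all divisors. -/
lemma prod_one_sub_eq_sum_moebius (k d : ℕ) (hd : d ≠ 0) :
    ∏ p ∈ d.primeFactors, (1 - ((p : ℚ))⁻¹ ^ k) =
      ∑ c ∈ d.divisors, (μ c : ℚ) * invPowQ k c := by
  classical
  set r := ∏ p ∈ d.primeFactors, p with hr
  have hprimes : ∀ p ∈ d.primeFactors, p.Prime := fun p hp => Nat.prime_of_mem_primeFactors hp
  have hrsq : Squarefree r := squarefree_prod_primes hprimes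
  have hrpf : r.primeFactors = d.primeFactors := Nat.primeFactors_prod hprimes
  have h1 : ∏ p ∈ d.primeFactors, (1 - ((p : ℚ))⁻¹ ^ k) =
      ∑ c ∈ r.divisors, (μ c : ℚ) * invPowQ k c := by
    rw [← hrpf]
    have := ArithmeticFunction.IsMultiplicative.prodPrimeFactors_one_sub_of_squarefree
      (invPowQ k) (isMultiplicative_invPowQ k) hrsq
    rw [← this]
    apply Finset.prod_congr rfl
    intro p hp
    rw [invPowQ_apply k p (Nat.prime_of_mem_primeFactors hp).ne_zero]
  rw [h1]
  -- both sides reduce to sums over squarefree divisors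
  have key : ∀ m : ℕ, m ≠ 0 →
      ∑ c ∈ m.divisors, (μ c : ℚ) * invPowQ k c =
        ∑ i ∈ (UniqueFactorizationMonoid.normalizedFactors m).toFinset.powerset,
          ((μ i.val.prod : ℚ) * invPowQ k i.val.prod) := by
    intro m hm
    have hfil : ∑ c ∈ m.divisors with Squarefree c, ((μ c : ℚ) * invPowQ k c) =
        ∑ c ∈ m.divisors, (μ c : ℚ) * invPowQ k c := by
      apply Finset.sum_filter_of_ne
      intro c _ hc
      by_contra hsq
      rw [ArithmeticFunction.moebius_eq_zero_of_not_squarefree hsq] at hc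
      simp at hc
    rw [← hfil]
    exact Nat.sum_divisors_filter_squarefree hm
  rw [key r hrsq.ne_zero, key d hd]
  have hnf : ∀ m : ℕ, (UniqueFactorizationMonoid.normalizedFactors m).toFinset = m.primeFactors := by
    intro m
    rw [Nat.factors_eq]
    simp [Nat.toFinset_factors]
  rw [hnf, hnf, hrpf]

/-- The pointwise product `μ(n) · n` as a `ℚ`-valued arithmetic function. -/
noncomputable def Mq : ArithmeticFunction ℚ :=
  ArithmeticFunction.pmul (μ : ArithmeticFunction ℚ)
    ((pow 1 : ArithmeticFunction ℕ) : ArithmeticFunction ℚ)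

lemma Mq_apply (n : ℕ) : Mq n = (μ n : ℚ) * n := by
  simp [Mq, ArithmeticFunction.pmul_apply, ArithmeticFunction.pow_apply]

lemma Mq_mul_pow_one : Mq * ((pow 1 : ArithmeticFunction ℕ) : ArithmeticFunction ℚ) = 1 := by
  ext n
  rw [ArithmeticFunction.mul_apply, ArithmeticFunction.one_apply]
  have h1 : ∀ p ∈ n.divisorsAntidiagonal,
      Mq p.1 * ((pow 1 : ArithmeticFunction ℕ) : ArithmeticFunction ℚ) p.2
      = (μ p.1 : ℚ) * n := by
    intro p hp
    obtain ⟨hpn, hn0⟩ := Nat.mem_divisorsAntidiagonal.mp hp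
    rw [Mq_apply]
    simp only [ArithmeticFunction.natCoe_apply, ArithmeticFunction.pow_apply]
    simp only [one_ne_zero, false_and, if_false, pow_one]
    rw [mul_assoc, ← Nat.cast_mul, hpn]
  rw [Finset.sum_congr rfl h1]
  have h2 : ∑ p ∈ n.divisorsAntidiagonal, (μ p.1 : ℚ) * n
      = (∑ d ∈ n.divisors, (μ d : ℚ)) * n := by
    rw [← Finset.sum_mul]
    congr 1
    exact Nat.sum_divisorsAntidiagonal (fun a _ => (μ a : ℚ))
  rw [h2]
  have h3 : ∑ d ∈ n.divisors, (μ d : ℚ) = if n = 1 then 1 else 0 := by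
    have h4 : ((μ * ζ : ArithmeticFunction ℤ)) n = (1 : ArithmeticFunction ℤ) n := by
      rw [ArithmeticFunction.moebius_mul_coe_zeta]
    rw [ArithmeticFunction.coe_mul_zeta_apply, ArithmeticFunction.one_apply] at h4
    have h5 : ((∑ d ∈ n.divisors, μ d : ℤ) : ℚ) = ((if n = 1 then 1 else 0 : ℤ) : ℚ) := by
      exact_mod_cast congrArg (fun z : ℤ => (z : ℚ)) h4
    push_cast at h5
    rw [h5]
  rw [h3]
  by_cases hn : n = 1 <;> simp [hn]

lemma key_ring_identity (k : ℕ) :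
    Mq * ((pow (k+1) : ArithmeticFunction ℕ) : ArithmeticFunction ℚ) *
        ((σ 1 : ArithmeticFunction ℕ) : ArithmeticFunction ℚ) =
      ((σ (k+1) : ArithmeticFunction ℕ) : ArithmeticFunction ℚ) := by
  have h1 : ((σ 1 : ArithmeticFunction ℕ) : ArithmeticFunction ℚ)
      = ((ζ : ArithmeticFunction ℕ) : ArithmeticFunction ℚ) *
        ((pow 1 : ArithmeticFunction ℕ) : ArithmeticFunction ℚ) := by
    rw [← ArithmeticFunction.natCoe_mul, ArithmeticFunction.zeta_mul_pow_eq_sigma]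
  have h2 : ((σ (k+1) : ArithmeticFunction ℕ) : ArithmeticFunction ℚ)
      = ((ζ : ArithmeticFunction ℕ) : ArithmeticFunction ℚ) *
        ((pow (k+1) : ArithmeticFunction ℕ) : ArithmeticFunction ℚ) := by
    rw [← ArithmeticFunction.natCoe_mul, ArithmeticFunction.zeta_mul_pow_eq_sigma]
  rw [h1, h2]
  have h3 : Mq * ((pow (k+1) : ArithmeticFunction ℕ) : ArithmeticFunction ℚ) *
      (((ζ : ArithmeticFunction ℕ) : ArithmeticFunction ℚ) *
        ((pow 1 : ArithmeticFunction ℕ) : ArithmeticFunction ℚ))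
      = (Mq * ((pow 1 : ArithmeticFunction ℕ) : ArithmeticFunction ℚ)) *
        (((ζ : ArithmeticFunction ℕ) : ArithmeticFunction ℚ) *
          ((pow (k+1) : ArithmeticFunction ℕ) : ArithmeticFunction ℚ)) := by
    ring
  rw [h3, Mq_mul_pow_one, one_mul]

/-- `n · (σ_{-1} * J_k)(n) = σ_{k+1}(n)` where `J_k` is Jacobi's totient function. -/
theorem mul_sigma_neg_one_conv_jacobi (k : ℕ) (hk : 1 ≤ k) (n : ℕ) (hn : 0 < n) :
    (n : ℚ) * ∑ d ∈ n.divisors,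
        (∑ e ∈ (n / d).divisors, ((e : ℚ))⁻¹) *
          ((d : ℚ) ^ k * ∏ p ∈ d.primeFactors, (1 - ((p : ℚ))⁻¹ ^ k)) =
      ∑ e ∈ n.divisors, (e : ℚ) ^ (k + 1) := by
  classical
  rw [Finset.mul_sum]
  -- Step 1: rewrite every summand as (Mq * pow (k+1)) d * σ₁ (n/d)
  have step1 : ∀ d ∈ n.divisors,
      (n : ℚ) * ((∑ e ∈ (n / d).divisors, ((e : ℚ))⁻¹) *
          ((d : ℚ) ^ k * ∏ p ∈ d.primeFactors, (1 - ((p : ℚ))⁻¹ ^ k))) =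
        (Mq * ((pow (k+1) : ArithmeticFunction ℕ) : ArithmeticFunction ℚ)) d *
          ((σ 1 : ArithmeticFunction ℕ) : ArithmeticFunction ℚ) (n / d) := by
    intro d hd
    obtain ⟨hdvd, hn0⟩ := Nat.mem_divisors.mp hd
    have hd0 : d ≠ 0 := (Nat.pos_of_mem_divisors hd).ne'
    set m := n / d with hm
    have hdm : d * m = n := Nat.mul_div_cancel' hdvd
    have hm0 : m ≠ 0 := by
      intro h; rw [h, mul_zero] at hdm; exact hn0 hdm.symm
    -- harmonic sum: ∑_{e|m} 1/e = σ₁(m)/m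
    have harm : ∑ e ∈ m.divisors, ((e : ℚ))⁻¹ = ((σ 1 m : ℕ) : ℚ) / m := by
      rw [← Nat.sum_div_divisors m (fun e => ((e : ℚ))⁻¹)]
      rw [ArithmeticFunction.sigma_one_apply, Nat.cast_sum, Finset.sum_div]
      apply Finset.sum_congr rfl
      intro e he
      obtain ⟨hedvd, _⟩ := Nat.mem_divisors.mp he
      have he0 : (e : ℚ) ≠ 0 := Nat.cast_ne_zero.mpr (Nat.pos_of_mem_divisors he).ne'
      have hmc : ((m / e : ℕ) : ℚ) = (m : ℚ) / e := Nat.cast_div hedvd he0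
      rw [hmc, div_eq_mul_inv, mul_inv, inv_inv, div_eq_mul_inv, mul_comm]
    -- Jacobi sum: d^k ∏ (1 - p⁻ᵏ) = ∑_{c|d} μ c (d/c)^k
    have jac : (d : ℚ) ^ k * ∏ p ∈ d.primeFactors, (1 - ((p : ℚ))⁻¹ ^ k) =
        ∑ c ∈ d.divisors, (μ c : ℚ) * ((d / c : ℕ) : ℚ) ^ k := by
      rw [prod_one_sub_eq_sum_moebius k d hd0, Finset.mul_sum]
      apply Finset.sum_congr rfl
      intro c hc
      obtain ⟨hcdvd, _⟩ := Nat.mem_divisors.mp hc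
      have hc0 : c ≠ 0 := (Nat.pos_of_mem_divisors hc).ne'
      have hcq : (c : ℚ) ≠ 0 := Nat.cast_ne_zero.mpr hc0
      rw [invPowQ_apply k c hc0, Nat.cast_div hcdvd hcq, div_pow, div_eq_mul_inv, ← inv_pow]
      ring
    -- combine
    rw [harm, jac]
    have hdq : (d : ℚ) ≠ 0 := Nat.cast_ne_zero.mpr hd0
    have hmq : (m : ℚ) ≠ 0 := Nat.cast_ne_zero.mpr hm0
    have hnm : (n : ℚ) = (d : ℚ) * m := by rw [← hdm]; push_cast; ring
    have lhs_eq : (n : ℚ) * (((σ 1 m : ℕ) : ℚ) / m *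
          ∑ c ∈ d.divisors, (μ c : ℚ) * ((d / c : ℕ) : ℚ) ^ k)
        = ((d : ℚ) * ∑ c ∈ d.divisors, (μ c : ℚ) * ((d / c : ℕ) : ℚ) ^ k) *
          ((σ 1 m : ℕ) : ℚ) := by
      rw [hnm]
      field_simp
    rw [lhs_eq]
    congr 1
    -- d * ∑ μ c (d/c)^k = (Mq * pow (k+1)) d
    rw [ArithmeticFunction.mul_apply, Finset.mul_sum]
    have e1 : ∑ c ∈ d.divisors, (d : ℚ) * ((μ c : ℚ) * ((d / c : ℕ) : ℚ) ^ k)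
        = ∑ x ∈ d.divisorsAntidiagonal, (d : ℚ) * ((μ x.1 : ℚ) * ((x.2 : ℕ) : ℚ) ^ k) :=
      (Nat.sum_divisorsAntidiagonal fun a b => (d : ℚ) * ((μ a : ℚ) * ((b : ℕ) : ℚ) ^ k)).symm
    rw [e1]
    apply Finset.sum_congr rfl
    intro p hp
    obtain ⟨hpn, _⟩ := Nat.mem_divisorsAntidiagonal.mp hp
    rw [Mq_apply]
    simp only [ArithmeticFunction.natCoe_apply, ArithmeticFunction.pow_apply]
    simp only [Nat.succ_ne_zero, false_and, if_false, one_ne_zero]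
    rw [← hpn]
    push_cast
    ring
  rw [Finset.sum_congr rfl step1]
  have conv_eq : ∑ d ∈ n.divisors,
      (Mq * ((pow (k+1) : ArithmeticFunction ℕ) : ArithmeticFunction ℚ)) d *
        ((σ 1 : ArithmeticFunction ℕ) : ArithmeticFunction ℚ) (n / d)
      = (Mq * ((pow (k+1) : ArithmeticFunction ℕ) : ArithmeticFunction ℚ) *
          ((σ 1 : ArithmeticFunction ℕ) : ArithmeticFunction ℚ)) n := by
    rw [ArithmeticFunction.mul_apply (f := Mq * ((pow (k+1) : ArithmeticFunction ℕ) : ArithmeticFunction ℚ))]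
    exact (Nat.sum_divisorsAntidiagonal fun a b =>
      (Mq * ((pow (k+1) : ArithmeticFunction ℕ) : ArithmeticFunction ℚ)) a *
        ((σ 1 : ArithmeticFunction ℕ) : ArithmeticFunction ℚ) b).symm
  rw [conv_eq, key_ring_identity k]
  rw [ArithmeticFunction.natCoe_apply, ArithmeticFunction.sigma_apply]
  push_cast
  rfl
end

section
/- Let G be a group with a descending chain of normal subgroups of finite index G = N_0 ⊇ N_1 ⊇ ⋯ ⊇ N_m, and let H ≤ G be a subgroup with N_m ≤ H. Then the index of H in G is finite and [G : H] = ∏_{i=1}^{m} |im(N_{i−1} → G/N_i)| / |im(H ∩ N_{i−1} → G/N_i)|, where the maps are induced by the quotient projections G → G/N_i. -/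
open Finset


lemma card_map_mk' {G : Type*} [Group G] (N K : Subgroup G) [N.Normal] :
    Nat.card (K.map (QuotientGroup.mk' N)) = N.relIndex K := by
  rw [← Subgroup.relIndex_bot_left, ← Subgroup.relIndex_comap,
    (QuotientGroup.mk' N).comap_bot, QuotientGroup.ker_mk']

lemma tele_chain {G : Type*} [Group G] (H : Subgroup G) (N : ℕ → Subgroup G) :
    ∀ m, (∀ i, i < m → N (i + 1) ≤ N i) →
      ∏ i ∈ Icc 1 m, (N i).relIndex (H ⊓ N (i - 1)) =
        (H ⊓ N m).relIndex (H ⊓ N 0) := by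
  intro m
  induction m with
  | zero => simp [Subgroup.relIndex_self]
  | succ m ih =>
    intro hchain
    have anti : ∀ j ≤ m + 1, N j ≤ N 0 := by
      intro j hj
      induction j with
      | zero => exact le_rfl
      | succ k ihk => exact (hchain k (by omega)).trans (ihk (by omega))
    rw [Finset.prod_Icc_succ_top (by omega : 1 ≤ m + 1),
      ih (fun i hi => hchain i (by omega))]
    have h1 : N (m + 1) ≤ N m := hchain m (by omega)
    have e1 : (N (m + 1)).relIndex (H ⊓ N m) =
        (H ⊓ N (m + 1)).relIndex (H ⊓ N m) := by
      rw [← Subgroup.inf_relIndex_right (N (m + 1)),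
        ← Subgroup.inf_relIndex_right (H ⊓ N (m + 1))]
      congr 1
      rw [inf_of_le_left (inf_le_inf_left H h1)]
      rw [inf_left_comm, inf_of_le_left h1]
    rw [Nat.add_sub_cancel, e1, mul_comm]
    exact Subgroup.relIndex_mul_relIndex _ _ _ (inf_le_inf_left H h1)
      (inf_le_inf_left H (anti m (by omega)))

/-- Index formula via a chain of normal subgroups: if `G = N_0 ⊇ N_1 ⊇ ⋯ ⊇ N_m` are normal
of finite index and `N_m ≤ H`, then `[G : H]` is finite and equals
`∏_{i=1}^{m} |im(N_{i-1} → G/N_i)| / |im(H ∩ N_{i-1} → G/N_i)|`. -/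
theorem index_eq_prod_of_chain (G : Type*) [Group G] (m : ℕ) (N : ℕ → Subgroup G)
    (hNorm : ∀ i, (N i).Normal) (hfin : ∀ i ≤ m, (N i).FiniteIndex)
    (h0 : N 0 = ⊤) (hchain : ∀ i, i < m → N (i + 1) ≤ N i)
    (H : Subgroup G) (hH : N m ≤ H) :
    H.index ≠ 0 ∧
      (H.index : ℚ) =
        ∏ i ∈ Icc 1 m,
          ((Nat.card (Subgroup.map (@QuotientGroup.mk' G _ (N i) (hNorm i)) (N (i - 1))) : ℚ) /
            (Nat.card (Subgroup.map (@QuotientGroup.mk' G _ (N i) (hNorm i)) (H ⊓ N (i - 1))) : ℚ)) := by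
  haveI := fun i => hNorm i
  have hNm : (N m).index ≠ 0 := (hfin m le_rfl).index_ne_zero
  have hkey : (N m).relIndex H * H.index = (N m).index := Subgroup.relIndex_mul_index hH
  have hHne : H.index ≠ 0 := fun h => hNm (by rw [← hkey, h, mul_zero])
  have hrne : (N m).relIndex H ≠ 0 := fun h => hNm (by rw [← hkey, h, zero_mul])
  refine ⟨hHne, ?_⟩
  have prodQ : ∏ i ∈ Icc 1 m, (N i).relIndex (N (i - 1)) = (N m).index := by
    have := tele_chain ⊤ N m hchain
    simp only [top_inf_eq] at this
    rw [this, h0, Subgroup.relIndex_top_right]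
  have prodR : ∏ i ∈ Icc 1 m, (N i).relIndex (H ⊓ N (i - 1)) = (N m).relIndex H := by
    rw [tele_chain H N m hchain, h0, inf_top_eq, inf_of_le_right hH]
  calc (H.index : ℚ)
      = ((N m).index : ℚ) / ((N m).relIndex H : ℚ) := by
        rw [eq_div_iff (by exact_mod_cast hrne), mul_comm]
        exact_mod_cast hkey
    _ = _ := by
        rw [← prodQ, ← prodR]
        push_cast
        rw [Finset.prod_div_distrib]
        refine congrArg₂ _ ?_ ?_ <;>
          exact Finset.prod_congr rfl fun i _ => by rw [card_map_mk']
end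

section
/- For every positive integer n, the number of subgroups of ℤ × ℤ of index n equals σ_1(n) = Σ_{d ∣ n} d. -/
open Finset

namespace IndexCountAux

/-- The subgroup of `ℤ × ℤ` generated by `(a, b)` and `(0, d)` (for `a > 0`),
described by divisibility conditions. -/
def Hsub (a b d : ℤ) : AddSubgroup (ℤ × ℤ) where
  carrier := {p | a ∣ p.1 ∧ a * d ∣ a * p.2 - b * p.1}
  zero_mem' := by simp
  add_mem' := by
    rintro p q ⟨h1, h2⟩ ⟨h3, h4⟩
    refine ⟨dvd_add h1 h3, ?_⟩
    have := dvd_add h2 h4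
    have he : a * (p + q).2 - b * (p + q).1 = (a * p.2 - b * p.1) + (a * q.2 - b * q.1) := by
      simp [Prod.snd_add, Prod.fst_add]; ring
    rw [he]; exact this
  neg_mem' := by
    rintro p ⟨h1, h2⟩
    refine ⟨dvd_neg.2 h1, ?_⟩
    have he : a * (-p).2 - b * (-p).1 = -(a * p.2 - b * p.1) := by
      simp; ring
    rw [he]; exact dvd_neg.2 h2

lemma mem_Hsub {a b d : ℤ} {p : ℤ × ℤ} :
    p ∈ Hsub a b d ↔ a ∣ p.1 ∧ a * d ∣ a * p.2 - b * p.1 := Iff.rfl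

lemma mem_Hsub_iff {a b d : ℤ} (ha : 0 < a) {p : ℤ × ℤ} :
    p ∈ Hsub a b d ↔ ∃ s t : ℤ, p = (s * a, s * b + t * d) := by
  constructor
  · rintro ⟨h1, h2⟩
    obtain ⟨s, hs⟩ := h1
    have h2' : a * d ∣ a * (p.2 - s * b) := by
      have : a * p.2 - b * p.1 = a * (p.2 - s * b) := by rw [hs]; ring
      rwa [this] at h2
    have hd : d ∣ p.2 - s * b := (mul_dvd_mul_iff_left (ne_of_gt ha)).mp h2'
    obtain ⟨t, ht⟩ := hd
    refine ⟨s, t, ?_⟩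
    ext
    · simp [hs, mul_comm]
    · simp; linarith
  · rintro ⟨s, t, rfl⟩
    exact ⟨⟨s, by ring⟩, ⟨t, by ring⟩⟩

lemma gen1_mem (a b d : ℤ) : ((a, b) : ℤ × ℤ) ∈ Hsub a b d :=
  ⟨dvd_refl a, ⟨0, by ring⟩⟩

lemma gen2_mem (a b d : ℤ) : (((0 : ℤ), d) : ℤ × ℤ) ∈ Hsub a b d :=
  ⟨dvd_zero a, ⟨1, by ring⟩⟩

lemma index_Hsub (a d : ℕ) (b : ℤ) (ha : 0 < a) (hd : 0 < d) :
    (Hsub (a : ℤ) b (d : ℤ)).index = a * d := by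
  have ha' : (0 : ℤ) < a := by exact_mod_cast ha
  have hd' : (0 : ℤ) < d := by exact_mod_cast hd
  set H := Hsub (a : ℤ) b (d : ℤ) with hH
  let g : Fin a × Fin d → (ℤ × ℤ) ⧸ H := fun x => QuotientAddGroup.mk ((x.1 : ℤ), (x.2 : ℤ))
  have hg : Function.Bijective g := by
    constructor
    · rintro ⟨i, j⟩ ⟨i', j'⟩ h
      have hmem : (((i : ℤ), (j : ℤ)) : ℤ × ℤ) - ((i' : ℤ), (j' : ℤ)) ∈ H := by
        rwa [QuotientAddGroup.eq_iff_sub_mem] at h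
      obtain ⟨h1, h2⟩ := hmem
      simp only [Prod.fst_sub, Prod.snd_sub] at h1 h2
      have hieq : (i : ℤ) = i' := by
        have hi0 : ((i : ℤ) - i') = 0 := by
          refine Int.eq_zero_of_abs_lt_dvd h1 ?_
          have h1b : (i : ℤ) < a := by exact_mod_cast i.2
          have h2b : (i' : ℤ) < a := by exact_mod_cast i'.2
          have h3b : (0 : ℤ) ≤ i := Int.natCast_nonneg _
          have h4b : (0 : ℤ) ≤ i' := Int.natCast_nonneg _
          rw [abs_lt]; omega
        linarith
      have hjeq : (j : ℤ) = j' := by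
        have hdvd : (d : ℤ) ∣ ((j : ℤ) - j') := by
          have hmm : (a : ℤ) * d ∣ (a : ℤ) * ((j : ℤ) - j') := by
            have he : (a : ℤ) * ((j : ℤ) - j') - b * ((i : ℤ) - i') = (a : ℤ) * ((j : ℤ) - j') := by
              rw [hieq]; ring
            rwa [he] at h2
          exact (mul_dvd_mul_iff_left (ne_of_gt ha')).mp hmm
        have hj0 : ((j : ℤ) - j') = 0 := by
          refine Int.eq_zero_of_abs_lt_dvd hdvd ?_
          have h1b : (j : ℤ) < d := by exact_mod_cast j.2
          have h2b : (j' : ℤ) < d := by exact_mod_cast j'.2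
          have h3b : (0 : ℤ) ≤ j := Int.natCast_nonneg _
          have h4b : (0 : ℤ) ≤ j' := Int.natCast_nonneg _
          rw [abs_lt]; omega
        linarith
      have hie : i = i' := Fin.ext (by exact_mod_cast hieq)
      have hje : j = j' := Fin.ext (by exact_mod_cast hjeq)
      simp [hie, hje]
    · intro q
      induction q using QuotientAddGroup.induction_on with
      | H p =>
        obtain ⟨x, y⟩ := p
        set r : ℤ := x % a with hr
        set u : ℤ := y - (x / a) * b with hu
        set v : ℤ := u % d with hv
        have hr0 : 0 ≤ r := Int.emod_nonneg x (ne_of_gt ha')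
        have hrlt : r < a := Int.emod_lt_of_pos x ha'
        have hv0 : 0 ≤ v := Int.emod_nonneg u (ne_of_gt hd')
        have hvlt : v < d := Int.emod_lt_of_pos u hd'
        refine ⟨(⟨r.toNat, by omega⟩, ⟨v.toNat, by omega⟩), ?_⟩
        show QuotientAddGroup.mk _ = QuotientAddGroup.mk _
        rw [QuotientAddGroup.eq_iff_sub_mem]
        have hrc : ((r.toNat : ℤ)) = r := Int.toNat_of_nonneg hr0
        have hvc : ((v.toNat : ℤ)) = v := Int.toNat_of_nonneg hv0
        have hx : x - r = a * (x / a) := by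
          have := Int.mul_ediv_add_emod x a; rw [hr]; linarith
        have huv : u - v = d * (u / d) := by
          have := Int.mul_ediv_add_emod u d; rw [hv]; linarith
        constructor
        · show (a : ℤ) ∣ ((r.toNat : ℤ), (v.toNat : ℤ)).1 - (x, y).1
          simp only [hrc]
          exact ⟨-(x / a), by linarith⟩
        · show (a : ℤ) * d ∣ (a : ℤ) * (((r.toNat : ℤ), (v.toNat : ℤ)).2 - (x, y).2)
            - b * (((r.toNat : ℤ), (v.toNat : ℤ)).1 - (x, y).1)
          simp only [hrc, hvc]
          refine ⟨-(u / d), ?_⟩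
          have he : (a : ℤ) * (v - y) - b * (r - x) = -((a : ℤ) * (u - v)) := by
            have hx' : r - x = -((a : ℤ) * (x / a)) := by linarith
            rw [hx', hu]; ring
          rw [he, huv]; ring
  have hcard := Nat.card_eq_of_bijective g hg
  rw [AddSubgroup.index_eq_card, ← hcard]
  simp [Nat.card_eq_fintype_card]

lemma Hsub_inj {a d a' d' : ℕ} {b b' : ℤ} (ha : 0 < a) (hd : 0 < d) (ha' : 0 < a')
    (hd' : 0 < d') (hb : 0 ≤ b) (hbd : b < d) (hb' : 0 ≤ b') (hbd' : b' < d')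
    (h : Hsub (a : ℤ) b (d : ℤ) = Hsub (a' : ℤ) b' (d' : ℤ)) : a = a' ∧ d = d' ∧ b = b' := by
  have key_a : ∀ (α δ α' δ' : ℕ) (β β' : ℤ),
      Hsub (α : ℤ) β (δ : ℤ) = Hsub (α' : ℤ) β' (δ' : ℤ) → (α' : ℤ) ∣ (α : ℤ) := by
    intro α δ α' δ' β β' hh
    have := gen1_mem (α : ℤ) β (δ : ℤ)
    rw [hh] at this
    exact this.1
  have key_d : ∀ (α δ α' δ' : ℕ) (β β' : ℤ), 0 < α' →
      Hsub (α : ℤ) β (δ : ℤ) = Hsub (α' : ℤ) β' (δ' : ℤ) → (δ' : ℤ) ∣ (δ : ℤ) := by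
    intro α δ α' δ' β β' hα' hh
    have hm := gen2_mem (α : ℤ) β (δ : ℤ)
    rw [hh] at hm
    obtain ⟨-, h2⟩ := hm
    have hmm : (α' : ℤ) * δ' ∣ (α' : ℤ) * δ := by
      have he : (α' : ℤ) * δ - β' * 0 = (α' : ℤ) * δ := by ring
      simpa [he] using h2
    exact (mul_dvd_mul_iff_left (ne_of_gt (by exact_mod_cast hα' : (0:ℤ) < α'))).mp hmm
  have haa : a = a' := by
    have h1 := key_a a d a' d' b b' h
    have h2 := key_a a' d' a d b' b h.symm
    exact_mod_cast Int.dvd_antisymm (by exact_mod_cast ha.le) (by exact_mod_cast ha'.le) h2 h1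
  have hdd : d = d' := by
    have h1 := key_d a d a' d' b b' ha' h
    have h2 := key_d a' d' a d b' b ha h.symm
    exact_mod_cast Int.dvd_antisymm (by exact_mod_cast hd.le) (by exact_mod_cast hd'.le) h2 h1
  subst haa; subst hdd
  refine ⟨rfl, rfl, ?_⟩
  have hm := gen1_mem (a : ℤ) b (d : ℤ)
  rw [h] at hm
  obtain ⟨-, h2⟩ := hm
  have hmm : (a : ℤ) * d ∣ (a : ℤ) * (b - b') := by
    have he : (a : ℤ) * b - b' * a = (a : ℤ) * (b - b') := by ring
    rwa [he] at h2
  have hdvd : (d : ℤ) ∣ b - b' :=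
    (mul_dvd_mul_iff_left (ne_of_gt (by exact_mod_cast ha : (0:ℤ) < a))).mp hmm
  have h0 : b - b' = 0 := by
    refine Int.eq_zero_of_abs_lt_dvd hdvd ?_
    rw [abs_lt]; omega
  linarith

lemma exists_repr {H : AddSubgroup (ℤ × ℤ)} (hH : H.index ≠ 0) :
    ∃ (a d : ℕ) (b : ℤ), 0 < a ∧ 0 < d ∧ 0 ≤ b ∧ b < d ∧ H = Hsub (a : ℤ) b (d : ℤ) := by
  set n := H.index with hn
  obtain ⟨a₀, ha₀⟩ := Int.subgroup_cyclic (AddSubgroup.map (AddMonoidHom.fst ℤ ℤ) H)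
  obtain ⟨d₀, hd₀⟩ := Int.subgroup_cyclic (AddSubgroup.comap (AddMonoidHom.inr ℤ ℤ) H)
  have hfst : ∀ p : ℤ × ℤ, p ∈ H → a₀ ∣ p.1 := by
    intro p hp
    have hmm : p.1 ∈ AddSubgroup.map (AddMonoidHom.fst ℤ ℤ) H := ⟨p, hp, rfl⟩
    rw [ha₀, AddSubgroup.mem_closure_singleton] at hmm
    obtain ⟨k, hk⟩ := hmm
    exact ⟨k, by rw [← hk]; rw [smul_eq_mul]; ring⟩
  have hsnd : ∀ y : ℤ, ((0 : ℤ), y) ∈ H → d₀ ∣ y := by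
    intro y hy
    have hmm : y ∈ AddSubgroup.comap (AddMonoidHom.inr ℤ ℤ) H := hy
    rw [hd₀, AddSubgroup.mem_closure_singleton] at hmm
    obtain ⟨k, hk⟩ := hmm
    exact ⟨k, by rw [← hk]; rw [smul_eq_mul]; ring⟩
  have hsndmem : ((0 : ℤ), d₀) ∈ H := by
    have hmm : d₀ ∈ AddSubgroup.comap (AddMonoidHom.inr ℤ ℤ) H := by
      rw [hd₀]; exact AddSubgroup.subset_closure rfl
    exact hmm
  have ha₀mem : ∃ y : ℤ, (a₀, y) ∈ H := by
    have hmm : a₀ ∈ AddSubgroup.map (AddMonoidHom.fst ℤ ℤ) H := by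
      rw [ha₀]; exact AddSubgroup.subset_closure rfl
    obtain ⟨p, hp, hp1⟩ := hmm
    refine ⟨p.2, ?_⟩
    have hpe : (a₀, p.2) = p := by
      ext
      · exact hp1.symm
      · rfl
    rwa [hpe]
  have hn1 : ((n : ℤ), (0 : ℤ)) ∈ H := by
    have := AddSubgroup.nsmul_index_mem H ((1 : ℤ), (0 : ℤ))
    simpa using this
  have hn2 : ((0 : ℤ), (n : ℤ)) ∈ H := by
    have := AddSubgroup.nsmul_index_mem H ((0 : ℤ), (1 : ℤ))
    simpa using this
  have ha₀ne : a₀ ≠ 0 := by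
    intro h0
    have hdv := hfst _ hn1
    rw [h0] at hdv
    simp only [zero_dvd_iff] at hdv
    exact hH (by exact_mod_cast hdv)
  have hd₀ne : d₀ ≠ 0 := by
    intro h0
    have hdv := hsnd _ hn2
    rw [h0] at hdv
    simp only [zero_dvd_iff] at hdv
    exact hH (by exact_mod_cast hdv)
  set a : ℕ := a₀.natAbs with ha
  set d : ℕ := d₀.natAbs with hd
  have hapos : 0 < a := Int.natAbs_pos.mpr ha₀ne
  have hdpos : 0 < d := Int.natAbs_pos.mpr hd₀ne
  have hdmem : ((0 : ℤ), (d : ℤ)) ∈ H := by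
    obtain ⟨k, hk⟩ : d₀ ∣ (d : ℤ) := Int.dvd_natAbs.mpr dvd_rfl
    have hsm : ((0 : ℤ), (d : ℤ)) = k • ((0 : ℤ), d₀) := by
      ext
      · simp
      · simp only [Prod.smul_snd, smul_eq_mul]; rw [hk]; ring
    rw [hsm]
    exact H.zsmul_mem hsndmem _
  have hamem : ∃ y : ℤ, ((a : ℤ), y) ∈ H := by
    obtain ⟨y, hy⟩ := ha₀mem
    obtain ⟨k, hk⟩ : a₀ ∣ (a : ℤ) := Int.dvd_natAbs.mpr dvd_rfl
    refine ⟨k * y, ?_⟩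
    have hsm : ((a : ℤ), k * y) = k • (a₀, y) := by
      ext
      · simp only [Prod.smul_fst, smul_eq_mul]; rw [hk]; ring
      · simp
    rw [hsm]
    exact H.zsmul_mem hy _
  obtain ⟨b₀, hb₀⟩ := hamem
  have hd' : (0 : ℤ) < d := by exact_mod_cast hdpos
  set b : ℤ := b₀ % d with hb
  have hb0 : 0 ≤ b := Int.emod_nonneg b₀ (ne_of_gt hd')
  have hblt : b < d := Int.emod_lt_of_pos b₀ hd'
  have hbmem : ((a : ℤ), b) ∈ H := by
    have hsub : ((a : ℤ), b) = ((a : ℤ), b₀) - (b₀ / d) • ((0 : ℤ), (d : ℤ)) := by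
      ext
      · simp
      · simp only [Prod.snd_sub, Prod.smul_snd, smul_eq_mul]
        have := Int.mul_ediv_add_emod b₀ d
        rw [hb]; linarith
    rw [hsub]
    exact H.sub_mem hb₀ (H.zsmul_mem hdmem _)
  refine ⟨a, d, b, hapos, hdpos, hb0, hblt, ?_⟩
  ext p
  constructor
  · intro hp
    have hdvd : (a : ℤ) ∣ p.1 := Int.natAbs_dvd.mpr (hfst p hp)
    obtain ⟨s, hs⟩ := hdvd
    have hmem2 : ((0 : ℤ), p.2 - s * b) ∈ H := by
      have hsub : ((0 : ℤ), p.2 - s * b) = p - s • ((a : ℤ), b) := by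
        ext
        · simp only [Prod.fst_sub, Prod.smul_fst, smul_eq_mul]
          rw [hs]; ring
        · simp
      rw [hsub]
      exact H.sub_mem hp (H.zsmul_mem hbmem _)
    have hddvd : (d : ℤ) ∣ p.2 - s * b := Int.natAbs_dvd.mpr (hsnd _ hmem2)
    obtain ⟨t, ht⟩ := hddvd
    refine ⟨⟨s, hs⟩, ⟨t, ?_⟩⟩
    rw [hs]
    linear_combination (a : ℤ) * ht
  · intro hp
    have ha' : (0 : ℤ) < a := by exact_mod_cast hapos
    rw [mem_Hsub_iff ha'] at hp
    obtain ⟨s, t, rfl⟩ := hp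
    have hsm : ((s * a : ℤ), (s * b + t * d : ℤ)) =
        s • (((a : ℤ), b) : ℤ × ℤ) + t • ((((0 : ℤ), (d : ℤ))) : ℤ × ℤ) := by
      simp only [Prod.smul_mk, smul_eq_mul, Prod.mk_add_mk, Prod.mk.injEq]
      exact ⟨by ring, trivial⟩
    rw [hsm]
    exact H.add_mem (H.zsmul_mem hbmem _) (H.zsmul_mem hdmem _)

end IndexCountAux

open IndexCountAux in
/-- The number of index-`n` subgroups of `ℤ × ℤ` is `σ₁(n)`. -/
theorem card_index_n_subgroups_int_sq (n : ℕ) (hn : 0 < n) :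
    Nat.card {H : AddSubgroup (ℤ × ℤ) // H.index = n} = ∑ d ∈ n.divisors, d := by
  classical
  have hposd : ∀ ad : n.divisorsAntidiagonal, 0 < (ad : ℕ × ℕ).1 ∧ 0 < (ad : ℕ × ℕ).2 := by
    intro ad
    have h1 : (ad : ℕ × ℕ).1 ≠ 0 := Nat.left_ne_zero_of_mem_divisorsAntidiagonal ad.2
    have h2 : (ad : ℕ × ℕ).2 ≠ 0 := Nat.right_ne_zero_of_mem_divisorsAntidiagonal ad.2
    omega
  let F : (Σ ad : n.divisorsAntidiagonal, Fin (ad : ℕ × ℕ).2) →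
      {H : AddSubgroup (ℤ × ℤ) // H.index = n} := fun x =>
    ⟨Hsub ((x.1 : ℕ × ℕ).1 : ℤ) ((x.2 : ℕ) : ℤ) ((x.1 : ℕ × ℕ).2 : ℤ), by
      obtain ⟨hmul, -⟩ := Nat.mem_divisorsAntidiagonal.mp x.1.2
      rw [index_Hsub _ _ _ (hposd x.1).1 (hposd x.1).2, hmul]⟩
  have hF : Function.Bijective F := by
    constructor
    · rintro ⟨⟨⟨a, d⟩, had⟩, b⟩ ⟨⟨⟨a', d'⟩, had'⟩, b'⟩ h
      have heq : Hsub (a : ℤ) ((b : ℕ) : ℤ) (d : ℤ) = Hsub (a' : ℤ) ((b' : ℕ) : ℤ) (d' : ℤ) := by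
        exact congrArg Subtype.val h
      have hap := hposd ⟨⟨a, d⟩, had⟩
      have hap' := hposd ⟨⟨a', d'⟩, had'⟩
      obtain ⟨h1, h2, h3⟩ := Hsub_inj hap.1 hap.2 hap'.1 hap'.2
        (Int.natCast_nonneg _) (by exact_mod_cast b.2) (Int.natCast_nonneg _)
        (by exact_mod_cast b'.2) heq
      subst h1; subst h2
      have hb : b = b' := Fin.ext (by exact_mod_cast h3)
      subst hb
      rfl
    · rintro ⟨H, hHi⟩
      obtain ⟨a, d, b, hapos, hdpos, hb0, hblt, rfl⟩ := exists_repr (by rw [hHi]; exact hn.ne')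
      have hmul : a * d = n := by rw [← hHi, index_Hsub a d b hapos hdpos]
      have hbnat : b.toNat < d := by omega
      refine ⟨⟨⟨(a, d), Nat.mem_divisorsAntidiagonal.mpr ⟨hmul, hn.ne'⟩⟩, ⟨b.toNat, hbnat⟩⟩, ?_⟩
      apply Subtype.ext
      show Hsub (a : ℤ) ((b.toNat : ℕ) : ℤ) (d : ℤ) = Hsub (a : ℤ) b (d : ℤ)
      rw [Int.toNat_of_nonneg hb0]
  rw [← Nat.card_eq_of_bijective F hF, Nat.card_eq_fintype_card, Fintype.card_sigma]
  simp only [Fintype.card_fin]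
  rw [Finset.univ_eq_attach, Finset.sum_attach n.divisorsAntidiagonal (fun ad => ad.2)]
  exact Nat.sum_divisorsAntidiagonal' (f := fun _ d => d)
end

section
/- Let δ = diag(d_1, …, d_g) be a diagonal integer matrix with positive diagonal entries and let D = (δ, 0; 0, I_g) and D' = (I_g, 0; 0, δ) be the corresponding 2g × 2g block-diagonal matrices. Then the set of matrices M ∈ Sp_{2g}(ℤ) of the form M = I_{2g} + D·N·D' for some integer matrix N ∈ M_{2g}(ℤ) is a subgroup of Sp_{2g}(ℤ). -/
open Matrix

/-- The set of integral symplectic matrices of the form `1 + D·N·D'`, where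
`D = diag(δ, 1)` and `D' = diag(1, δ)` in block form, is a subgroup of `Sp_{2g}(ℤ)`. -/
theorem congruence_type_subgroup (g : ℕ) (d : Fin g → ℕ) (hd : ∀ i, 0 < d i) :
    ∃ H : Subgroup (Matrix.symplecticGroup (Fin g) ℤ),
      ∀ M : Matrix.symplecticGroup (Fin g) ℤ,
        M ∈ H ↔
          ∃ N : Matrix (Fin g ⊕ Fin g) (Fin g ⊕ Fin g) ℤ,
            (M : Matrix (Fin g ⊕ Fin g) (Fin g ⊕ Fin g) ℤ) =
              1 + (Matrix.fromBlocks (Matrix.diagonal fun i => (d i : ℤ)) 0 0 1) * N *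
                    (Matrix.fromBlocks 1 0 0 (Matrix.diagonal fun i => (d i : ℤ))) := by
  set D : Matrix (Fin g ⊕ Fin g) (Fin g ⊕ Fin g) ℤ :=
    Matrix.fromBlocks (Matrix.diagonal fun i => (d i : ℤ)) 0 0 1 with hD
  set D' : Matrix (Fin g ⊕ Fin g) (Fin g ⊕ Fin g) ℤ :=
    Matrix.fromBlocks 1 0 0 (Matrix.diagonal fun i => (d i : ℤ)) with hD'
  have hDJ : D * J (Fin g) ℤ = J (Fin g) ℤ * D' := by
    simp [hD, hD', Matrix.J, Matrix.fromBlocks_multiply]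
  have hDt : Dᵀ = D := by
    simp [hD, Matrix.fromBlocks_transpose]
  have hD't : D'ᵀ = D' := by
    simp [hD', Matrix.fromBlocks_transpose]
  refine ⟨{
    carrier := {M | ∃ N : Matrix (Fin g ⊕ Fin g) (Fin g ⊕ Fin g) ℤ,
      (M : Matrix (Fin g ⊕ Fin g) (Fin g ⊕ Fin g) ℤ) = 1 + D * N * D'},
    one_mem' := ⟨0, by simp⟩,
    mul_mem' := by
      rintro M₁ M₂ ⟨A, hA⟩ ⟨B, hB⟩
      refine ⟨A + B + A * D' * D * B, ?_⟩
      push_cast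
      rw [hA, hB]
      noncomm_ring
    inv_mem' := by
      rintro M ⟨A, hA⟩
      refine ⟨-(J (Fin g) ℤ * Aᵀ * J (Fin g) ℤ), ?_⟩
      rw [SymplecticGroup.coe_inv, hA]
      have hJJ : J (Fin g) ℤ * J (Fin g) ℤ = -1 := J_squared _ _
      calc -J (Fin g) ℤ * (1 + D * A * D')ᵀ * J (Fin g) ℤ
          = -(J (Fin g) ℤ * J (Fin g) ℤ)
            - (J (Fin g) ℤ * D') * Aᵀ * (D * J (Fin g) ℤ) := by
            rw [Matrix.transpose_add, Matrix.transpose_one, Matrix.transpose_mul,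
              Matrix.transpose_mul, hDt, hD't]
            noncomm_ring
        _ = 1 - (D * J (Fin g) ℤ) * Aᵀ * (J (Fin g) ℤ * D') := by
            rw [hJJ, hDJ]; noncomm_ring
        _ = 1 + D * -(J (Fin g) ℤ * Aᵀ * J (Fin g) ℤ) * D' := by noncomm_ring }, ?_⟩
  intro M
  exact Iff.rfl
end
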